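/- arXiv:0904.1696 — 2 statements merged into one kernel-verified Lean document; each statement's English description precedes it below -/
import Mathlib

section
/- Let G be an abstract k-molecule and suppose A_k and B_k are two sets of k vertices each making (G, A_k) and (G, B_k) a k-premolecule (i.e., G is isomorphic to a k-molecule with that set as base). Then the induced subgraphs G[A_k \ B_k], G[B_k \ A_k], and G[V(G) \ (A_k ∪ B_k)] are all edgeless, and the induced subgraphs G[A_k] and G[B_k] are isomorphic. -/
open SimpleGraph

/-- `G` is `m`-connected in the sense of Menger: any two distinct vertices are
joined by `m` pairwise distinct, internally disjoint paths. -/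
def MengerConnected {V : Type*} (m : ℕ) (G : SimpleGraph V) : Prop :=
  ∀ u v : V, u ≠ v → ∃ P : Fin m → G.Path u v, Function.Injective P ∧
    ∀ i j, i ≠ j → ∀ x, x ∈ (P i).1.support → x ∈ (P j).1.support → x = u ∨ x = v

/-- The connectivity of a graph: the largest `m` for which it is `m`-connected.
(With this definition the connectivity of the `k`-clique is `k-1`, as in the
paper's convention.) -/
noncomputable def connectivity {V : Type*} (G : SimpleGraph V) : ℕ :=
  sSup {m | MengerConnected m G}

/-- The `k`-molecule `ϑ_{B_k}^{Bs,h}`: its vertices are a base `B_k` of `k`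
vertices (the `Sum.inl` vertices) carrying the internal edge set `Bs`, together
with `h` further vertices `v₁, …, v_h` (the `Sum.inr` vertices), each adjacent
to every base vertex and to no other non-base vertex. -/
def molecule (k h : ℕ) (Bs : SimpleGraph (Fin k)) : SimpleGraph (Fin k ⊕ Fin h) where
  Adj x y :=
    match x, y with
    | Sum.inl a, Sum.inl b => Bs.Adj a b
    | Sum.inl _, Sum.inr _ => True
    | Sum.inr _, Sum.inl _ => True
    | Sum.inr _, Sum.inr _ => False
  symm := ⟨by rintro (a | a) (b | b) hab <;> first | exact hab.symm | trivial⟩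
  loopless := ⟨by rintro (a | a) hab <;> first | exact Bs.irrefl hab | exact hab⟩

/-- `(G, A)` is a `k`-premolecule: `G` is isomorphic to a `k`-molecule via an
isomorphism sending `A` to the base. -/
def IsPremolecule {V : Type*} (k : ℕ) (G : SimpleGraph V) (A : Set V) : Prop :=
  ∃ (h : ℕ) (Bs : SimpleGraph (Fin k)) (e : G ≃g molecule k h Bs),
    1 ≤ h ∧ k - connectivity Bs ≤ h ∧
    ∀ a : V, a ∈ A ↔ ∃ i : Fin k, e a = Sum.inl i

section Aux
variable {V : Type*} {k : ℕ} {G : SimpleGraph V} {A : Set V}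

lemma prem_base_adj (hA : IsPremolecule k G A) {u v : V} (hu : u ∈ A) (hv : v ∉ A) :
    G.Adj u v := by
  obtain ⟨h, Bs, e, -, -, hiff⟩ := hA
  obtain ⟨i, hi⟩ := (hiff u).mp hu
  rcases hev : e v with j | j
  · exact absurd ((hiff v).mpr ⟨j, hev⟩) hv
  · have : (molecule k h Bs).Adj (e u) (e v) := by rw [hi, hev]; trivial
    exact e.map_adj_iff.mp this

lemma prem_nonbase_nonadj (hA : IsPremolecule k G A) {u v : V} (hu : u ∉ A) (hv : v ∉ A) :
    ¬ G.Adj u v := by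
  obtain ⟨h, Bs, e, -, -, hiff⟩ := hA
  rcases heu : e u with i | i
  · exact absurd ((hiff u).mpr ⟨i, heu⟩) hu
  rcases hev : e v with j | j
  · exact absurd ((hiff v).mpr ⟨j, hev⟩) hv
  intro hadj
  have : (molecule k h Bs).Adj (e u) (e v) := e.map_adj_iff.mpr hadj
  rw [heu, hev] at this
  exact this

noncomputable def prem_equiv (hA : IsPremolecule k G A) : A ≃ Fin k := by
  choose h Bs e _ _ hiff using hA
  exact
    { toFun := fun a => Classical.choose ((hiff a).mp a.2)
      invFun := fun i => ⟨e.symm (Sum.inl i), (hiff _).mpr ⟨i, by simp⟩⟩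
      left_inv := fun a => by
        have := Classical.choose_spec ((hiff a).mp a.2)
        apply Subtype.ext
        simp [← this]
      right_inv := fun i => by
        have h2 : e (e.symm (Sum.inl i)) = Sum.inl i := by simp
        have hs := Classical.choose_spec ((hiff (e.symm (Sum.inl i))).mp
          ((hiff _).mpr ⟨i, h2⟩))
        exact Sum.inl_injective (hs.symm.trans h2) }

lemma prem_card (hA : IsPremolecule k G A) : Nat.card A = k := by
  rw [Nat.card_congr (prem_equiv hA)]; simp

end Aux

/-- if `(G, A)` and `(G, B)` are both `k`-premolecules, then the
subgraphs induced by `A \ B`, `B \ A` and `V(G) \ (A ∪ B)` are all edgeless, and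
the subgraphs induced by `A` and `B` are isomorphic. -/
theorem premolecule_two_bases {V : Type*} [Fintype V] (k : ℕ) (G : SimpleGraph V)
    (A B : Set V) (hA : IsPremolecule k G A) (hB : IsPremolecule k G B) :
    (∀ u ∈ A \ B, ∀ v ∈ A \ B, ¬ G.Adj u v) ∧
    (∀ u ∈ B \ A, ∀ v ∈ B \ A, ¬ G.Adj u v) ∧
    (∀ u ∈ (A ∪ B)ᶜ, ∀ v ∈ (A ∪ B)ᶜ, ¬ G.Adj u v) ∧
    Nonempty (G.induce A ≃g G.induce B) := by
  classical
  refine ⟨fun u hu v hv => prem_nonbase_nonadj hB hu.2 hv.2,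
    fun u hu v hv => prem_nonbase_nonadj hA hu.2 hv.2,
    fun u hu v hv => prem_nonbase_nonadj hA (fun h => hu (Or.inl h)) (fun h => hv (Or.inl h)),
    ?_⟩
  have hcard : Nat.card ↥(A \ B) = Nat.card ↥(B \ A) := by
    rw [Nat.card_coe_set_eq, Nat.card_coe_set_eq]
    have hncAB : A.ncard = B.ncard := by
      rw [← Nat.card_coe_set_eq, ← Nat.card_coe_set_eq, prem_card hA, prem_card hB]
    have hAB : A.encard = B.encard := by
      rw [A.toFinite.encard_eq_coe, B.toFinite.encard_eq_coe, ← Set.ncard_def, ← Set.ncard_def,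
        hncAB]
    have h1 := Set.encard_diff_add_encard_inter A B
    have h2 := Set.encard_diff_add_encard_inter B A
    rw [Set.inter_comm B A] at h2
    have henc : (A \ B).encard = (B \ A).encard := by
      have := h1.trans (hAB.trans h2.symm)
      exact WithTop.add_right_cancel (A ∩ B).toFinite.encard_lt_top.ne this
    rw [Set.ncard_def, Set.ncard_def, henc]
  obtain ⟨g⟩ : Nonempty (↥(A \ B) ≃ ↥(B \ A)) := Finite.card_eq.mp hcard
  let f : ↥A → ↥B := fun a =>
    if h : (a : V) ∈ B then ⟨a, h⟩ else ⟨g ⟨a, a.2, h⟩, (g ⟨a, a.2, h⟩).2.1⟩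
  let f' : ↥B → ↥A := fun b =>
    if h : (b : V) ∈ A then ⟨b, h⟩ else ⟨g.symm ⟨b, b.2, h⟩, (g.symm ⟨b, b.2, h⟩).2.1⟩
  have hf_eq : ∀ a : ↥A, (a : V) ∈ B → ((f a : V) = a) := by
    intro a h; simp only [f, dif_pos h]
  have hf_mem : ∀ a : ↥A, (a : V) ∉ B → ((f a : V) ∈ B \ A) := by
    intro a h; simp only [f, dif_neg h]; exact (g ⟨a, a.2, h⟩).2
  have hf'_eq : ∀ b : ↥B, (b : V) ∈ A → ((f' b : V) = b) := by
    intro b h; simp only [f', dif_pos h]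
  have hf'_mem : ∀ b : ↥B, (b : V) ∉ A → ((f' b : V) ∈ A \ B) := by
    intro b h; simp only [f', dif_neg h]; exact (g.symm ⟨b, b.2, h⟩).2
  have left : ∀ a, f' (f a) = a := by
    intro a
    by_cases h : (a : V) ∈ B
    · have h1 : ((f a : V)) ∈ A := (hf_eq a h) ▸ a.2
      apply Subtype.ext
      rw [hf'_eq (f a) h1]
      exact hf_eq a h
    · have h2 : ((f a : V)) ∉ A := (hf_mem a h).2
      apply Subtype.ext
      simp only [f', dif_neg h2]
      have h3 : (⟨(f a : V), (f a).2, h2⟩ : ↥(B \ A)) = g ⟨a, a.2, h⟩ := by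
        apply Subtype.ext
        simp only [f, dif_neg h]
      rw [h3, Equiv.symm_apply_apply]
  have right : ∀ b, f (f' b) = b := by
    intro b
    by_cases h : (b : V) ∈ A
    · have h1 : ((f' b : V)) ∈ B := (hf'_eq b h) ▸ b.2
      apply Subtype.ext
      rw [hf_eq (f' b) h1]
      exact hf'_eq b h
    · have h2 : ((f' b : V)) ∉ B := (hf'_mem b h).2
      apply Subtype.ext
      simp only [f, dif_neg h2]
      have h3 : (⟨(f' b : V), (f' b).2, h2⟩ : ↥(A \ B)) = g.symm ⟨b, b.2, h⟩ := by
        apply Subtype.ext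
        simp only [f', dif_neg h]
      rw [h3, Equiv.apply_symm_apply]
  refine ⟨⟨⟨f, f', left, right⟩, ?_⟩⟩
  intro a b
  show G.Adj ↑(f a) ↑(f b) ↔ G.Adj ↑a ↑b
  by_cases ha : (a : V) ∈ B <;> by_cases hb : (b : V) ∈ B
  · rw [hf_eq a ha, hf_eq b hb]
  · refine iff_of_true ?_ (prem_base_adj hB ha hb)
    rw [hf_eq a ha]
    exact prem_base_adj hA a.2 (hf_mem b hb).2
  · refine iff_of_true ?_ ((prem_base_adj hB hb ha).symm)
    rw [hf_eq b hb]
    exact (prem_base_adj hA b.2 (hf_mem a ha).2).symm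
  · refine iff_of_false ?_ (prem_nonbase_nonadj hB ha hb)
    exact prem_nonbase_nonadj hA (hf_mem a ha).2 (hf_mem b hb).2
end

section
/- A 3-molecule ϑ_{B₃}^{B,h} is ambiguous (admits more than one base) if and only if one of the following holds: |B| = 3 and h = 1 (the graph is K₄); |B| = 2 and h = 2; or |B| = 0 and h = 3 (the graph is K₃,₃). -/
open SimpleGraph

-- molecule simp lemmas
@[simp] lemma molecule_adj_inl_inl {k h : ℕ} {Bs : SimpleGraph (Fin k)} (a b : Fin k) :
    (molecule k h Bs).Adj (Sum.inl a) (Sum.inl b) ↔ Bs.Adj a b := Iff.rfl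

@[simp] lemma molecule_adj_inl_inr {k h : ℕ} {Bs : SimpleGraph (Fin k)} (a : Fin k) (b : Fin h) :
    (molecule k h Bs).Adj (Sum.inl a) (Sum.inr b) ↔ True := Iff.rfl

@[simp] lemma molecule_adj_inr_inl {k h : ℕ} {Bs : SimpleGraph (Fin k)} (a : Fin h) (b : Fin k) :
    (molecule k h Bs).Adj (Sum.inr a) (Sum.inl b) ↔ True := Iff.rfl

@[simp] lemma molecule_adj_inr_inr {k h : ℕ} {Bs : SimpleGraph (Fin k)} (a b : Fin h) :
    (molecule k h Bs).Adj (Sum.inr a) (Sum.inr b) ↔ False := Iff.rfl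

-- fin 3 facts
lemma fin3_third : ∀ p q : Fin 3, p ≠ q → ∃ r, r ≠ p ∧ r ≠ q ∧
    ∀ x : Fin 3, x = p ∨ x = q ∨ x = r := by decide

lemma fin3_others : ∀ u : Fin 3, ∃ w1 w2 : Fin 3, w1 ≠ w2 ∧ w1 ≠ u ∧ w2 ≠ u ∧
    ∀ x : Fin 3, x = u ∨ x = w1 ∨ x = w2 := by decide

-- Menger basics
lemma mc_zero {V : Type*} (G : SimpleGraph V) : MengerConnected 0 G := by
  intro u v _
  exact ⟨Fin.elim0, fun i => i.elim0, fun i => i.elim0⟩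

lemma mc_mono {V : Type*} {G : SimpleGraph V} {m n : ℕ} (hmn : n ≤ m)
    (hG : MengerConnected m G) : MengerConnected n G := by
  intro u v huv
  obtain ⟨P, hinj, hdis⟩ := hG u v huv
  refine ⟨fun i => P (Fin.castLE hmn i), fun i j hij => Fin.castLE_injective hmn (hinj hij),
    fun i j hij x hx hy => hdis _ _ (fun hc => hij (Fin.castLE_injective hmn hc)) x hx hy⟩

lemma no_mc_two (H : SimpleGraph (Fin 3)) (u v : Fin 3) (huv : u ≠ v) (hna : ¬H.Adj u v) :
    ¬ MengerConnected 2 H := by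
  intro hM
  obtain ⟨P, hinj, hdisj⟩ := hM u v huv
  have key : ∀ i : Fin 2, ∃ w, w ∈ (P i).1.support ∧ w ≠ u ∧ w ≠ v := by
    intro i
    cases hP : (P i).1 with
    | nil => exact absurd rfl huv
    | cons hadj q =>
      rename_i w
      refine ⟨w, ?_, fun hwu => H.irrefl (hwu ▸ hadj), fun hwv => hna (hwv ▸ hadj)⟩
      rw [SimpleGraph.Walk.support_cons]
      exact List.mem_cons_of_mem _ q.start_mem_support
  obtain ⟨w0, hw0, hw0u, hw0v⟩ := key 0
  obtain ⟨w1, hw1, hw1u, hw1v⟩ := key 1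
  have hww : w0 = w1 := by
    have h0 := w0.isLt; have h1 := w1.isLt; have hu := u.isLt; have hv := v.isLt
    simp only [Fin.ext_iff, ne_eq] at *
    omega
  rcases hdisj 0 1 (by decide) w0 hw0 (hww ▸ hw1) with h | h
  · exact hw0u h
  · exact hw0v h

lemma conn_le_one (H : SimpleGraph (Fin 3)) (u v : Fin 3) (huv : u ≠ v) (hna : ¬H.Adj u v) :
    connectivity H ≤ 1 := by
  unfold connectivity
  refine csSup_le ⟨0, mc_zero H⟩ ?_
  intro m hm
  by_contra hlt
  push_neg at hlt
  exact no_mc_two H u v huv hna (mc_mono (by omega) hm)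

-- edge set lemmas
lemma edgeSet_sub_pair (H : SimpleGraph (Fin 3)) (u w1 w2 : Fin 3)
    (hcov : ∀ x : Fin 3, x = u ∨ x = w1 ∨ x = w2) (h12 : ¬H.Adj w1 w2) :
    H.edgeSet ⊆ {s(u,w1), s(u,w2)} := by
  intro e he
  induction e using Sym2.ind with
  | _ x y =>
    rw [SimpleGraph.mem_edgeSet] at he
    rcases hcov x with rfl | rfl | rfl <;> rcases hcov y with rfl | rfl | rfl <;>
      first
        | exact absurd he (H.irrefl)
        | exact absurd he h12
        | exact absurd he.symm h12
        | simp [Sym2.eq_iff]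

lemma edgeSet_sub_single (H : SimpleGraph (Fin 3)) (u w1 w2 : Fin 3)
    (hcov : ∀ x : Fin 3, x = u ∨ x = w1 ∨ x = w2) (h12 : ¬H.Adj w1 w2)
    (h1 : ¬H.Adj u w1) : H.edgeSet ⊆ {s(u,w2)} := by
  intro e he
  induction e using Sym2.ind with
  | _ x y =>
    rw [SimpleGraph.mem_edgeSet] at he
    rcases hcov x with rfl | rfl | rfl <;> rcases hcov y with rfl | rfl | rfl <;>
      first
        | exact absurd he (H.irrefl)
        | exact absurd he h12
        | exact absurd he.symm h12
        | exact absurd he h1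
        | exact absurd he.symm h1
        | simp [Sym2.eq_iff]

lemma ncard_of_allAdj (H : SimpleGraph (Fin 3)) (hall : ∀ p q : Fin 3, p ≠ q → H.Adj p q) :
    H.edgeSet.ncard = 3 := by
  have hE : H.edgeSet = {s(0,1), s(0,2), s(1,2)} := by
    apply Set.Subset.antisymm
    · intro e he
      induction e using Sym2.ind with
      | _ x y =>
        rw [SimpleGraph.mem_edgeSet] at he
        fin_cases x <;> fin_cases y <;>
          first
            | exact absurd he (H.irrefl)
            | simp [Sym2.eq_iff]
    · intro e he
      rcases he with rfl | rfl | rfl <;>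
        exact (SimpleGraph.mem_edgeSet _).mpr (hall _ _ (by decide))
  rw [hE, Set.ncard_insert_of_notMem (by simp [Sym2.eq_iff]),
    Set.ncard_insert_of_notMem (by simp [Sym2.eq_iff]), Set.ncard_singleton]

lemma ncard_of_path (H : SimpleGraph (Fin 3)) (u w1 w2 : Fin 3)
    (hcov : ∀ x : Fin 3, x = u ∨ x = w1 ∨ x = w2)
    (h12 : w1 ≠ w2) (hu1 : u ≠ w1) (hu2 : u ≠ w2)
    (a1 : H.Adj u w1) (a2 : H.Adj u w2) (na : ¬H.Adj w1 w2) :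
    H.edgeSet.ncard = 2 := by
  have hE : H.edgeSet = {s(u,w1), s(u,w2)} := by
    apply Set.Subset.antisymm (edgeSet_sub_pair H u w1 w2 hcov na)
    intro e he
    rcases he with rfl | rfl
    · exact (SimpleGraph.mem_edgeSet _).mpr a1
    · exact (SimpleGraph.mem_edgeSet _).mpr a2
  rw [hE]
  exact Set.ncard_pair (by simp [Sym2.eq_iff]; tauto)

lemma ncard_of_empty (H : SimpleGraph (Fin 3)) (hno : ∀ p q : Fin 3, ¬H.Adj p q) :
    H.edgeSet.ncard = 0 := by
  have hE : H.edgeSet = ∅ := by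
    ext e
    induction e using Sym2.ind with
    | _ x y => simp [hno x y]
  rw [hE, Set.ncard_empty]

-- structure from edge counts
lemma allAdj_of_ncard3 (H : SimpleGraph (Fin 3)) (hE : H.edgeSet.ncard = 3) :
    ∀ p q : Fin 3, p ≠ q → H.Adj p q := by
  by_contra hc
  push_neg at hc
  obtain ⟨p, q, hpq, hna⟩ := hc
  obtain ⟨r, hrp, hrq, hcov⟩ := fin3_third p q hpq
  have hsub : H.edgeSet ⊆ {s(r,p), s(r,q)} :=
    edgeSet_sub_pair H r p q (fun x => by rcases hcov x with rfl|rfl|rfl <;> tauto) hna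
  have := Set.ncard_le_ncard hsub (Set.toFinite _)
  have h2 := Set.ncard_insert_le (s(r,p)) ({s(r,q)} : Set (Sym2 (Fin 3)))
  rw [Set.ncard_singleton] at h2
  omega

lemma path_of_ncard2 (H : SimpleGraph (Fin 3)) (hE : H.edgeSet.ncard = 2) :
    ∃ u w1 w2 : Fin 3, (∀ x : Fin 3, x = u ∨ x = w1 ∨ x = w2) ∧
      w1 ≠ w2 ∧ u ≠ w1 ∧ u ≠ w2 ∧ H.Adj u w1 ∧ H.Adj u w2 ∧ ¬H.Adj w1 w2 := by
  have hna : ∃ p q : Fin 3, p ≠ q ∧ ¬H.Adj p q := by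
    by_contra hc
    push_neg at hc
    rw [ncard_of_allAdj H hc] at hE
    omega
  obtain ⟨w1, w2, h12, hna⟩ := hna
  obtain ⟨u, hu1, hu2, hcov⟩ := fin3_third w1 w2 h12
  have hcov' : ∀ x : Fin 3, x = u ∨ x = w1 ∨ x = w2 := fun x => by
    rcases hcov x with rfl|rfl|rfl <;> tauto
  have a1 : H.Adj u w1 := by
    by_contra hc
    have hsub := edgeSet_sub_single H u w1 w2 hcov' hna hc
    have := Set.ncard_le_ncard hsub (Set.toFinite _)
    rw [Set.ncard_singleton] at this
    omega
  have a2 : H.Adj u w2 := by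
    by_contra hc
    have hsub := edgeSet_sub_single H u w2 w1
      (fun x => by rcases hcov' x with rfl|rfl|rfl <;> tauto)
      (fun hadj => hna hadj.symm) hc
    have := Set.ncard_le_ncard hsub (Set.toFinite _)
    rw [Set.ncard_singleton] at this
    omega
  exact ⟨u, w1, w2, hcov', h12, hu1, hu2, a1, a2, hna⟩

lemma noAdj_of_ncard0 (H : SimpleGraph (Fin 3)) (hE : H.edgeSet.ncard = 0) :
    ∀ p q : Fin 3, ¬H.Adj p q := by
  intro p q hadj
  rw [Set.ncard_eq_zero] at hE
  exact absurd (hE ▸ (SimpleGraph.mem_edgeSet _).mpr hadj) (Set.notMem_empty _)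

-- case 1 iso (K₄)
def f1 : Fin 3 ⊕ Fin 1 → Fin 3 ⊕ Fin 1 := fun x =>
  match x with
  | Sum.inl y => if y = 2 then Sum.inr 0 else Sum.inl y
  | Sum.inr _ => Sum.inl 2

lemma f1_inv : Function.Involutive f1 := by
  have : ∀ x, f1 (f1 x) = x := by decide
  exact this

lemma f1_adj (Bs : SimpleGraph (Fin 3)) (hall : ∀ p q : Fin 3, p ≠ q → Bs.Adj p q) :
    ∀ a b, (molecule 3 1 Bs).Adj (f1 a) (f1 b) ↔ (molecule 3 1 Bs).Adj a b := by
  have h01 := hall 0 1 (by decide); have h02 := hall 0 2 (by decide)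
  have h12 := hall 1 2 (by decide); have h10 := hall 1 0 (by decide)
  have h20 := hall 2 0 (by decide); have h21 := hall 2 1 (by decide)
  rintro (a | a) (b | b) <;> fin_cases a <;> fin_cases b <;>
    simp [f1, h01, h02, h12, h10, h20, h21]

-- case 3 iso (K₃,₃)
lemma f3_adj (Bs : SimpleGraph (Fin 3)) (hno : ∀ p q : Fin 3, ¬Bs.Adj p q) :
    ∀ a b, (molecule 3 3 Bs).Adj (Sum.swap a) (Sum.swap b) ↔ (molecule 3 3 Bs).Adj a b := by
  rintro (a | a) (b | b) <;> simp [hno]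

-- case 2 iso
def f2 (w1 w2 : Fin 3) : Fin 3 ⊕ Fin 2 → Fin 3 ⊕ Fin 2 := fun x =>
  match x with
  | Sum.inl y => if y = w1 then Sum.inr 0 else if y = w2 then Sum.inr 1 else Sum.inl y
  | Sum.inr j => if j = 0 then Sum.inl w1 else Sum.inl w2

lemma f2_inv (w1 w2 : Fin 3) (h12 : w1 ≠ w2) : Function.Involutive (f2 w1 w2) := by
  have h21 : w2 ≠ w1 := h12.symm
  intro x
  rcases x with y | j
  · by_cases hy1 : y = w1
    · subst hy1; simp [f2]
    · by_cases hy2 : y = w2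
      · subst hy2; simp [f2, h21]
      · simp [f2, hy1, hy2]
  · fin_cases j <;> simp [f2, h21]

lemma f2_adj (Bs : SimpleGraph (Fin 3)) (u w1 w2 : Fin 3)
    (hcov : ∀ x : Fin 3, x = u ∨ x = w1 ∨ x = w2)
    (h12 : w1 ≠ w2) (hu1 : u ≠ w1) (hu2 : u ≠ w2)
    (a1 : Bs.Adj u w1) (a2 : Bs.Adj u w2) (na : ¬Bs.Adj w1 w2) :
    ∀ a b, (molecule 3 2 Bs).Adj (f2 w1 w2 a) (f2 w1 w2 b) ↔ (molecule 3 2 Bs).Adj a b := by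
  have h21 : w2 ≠ w1 := h12.symm
  have h1u : w1 ≠ u := hu1.symm
  have h2u : w2 ≠ u := hu2.symm
  have a1' : Bs.Adj w1 u := a1.symm
  have a2' : Bs.Adj w2 u := a2.symm
  have na' : ¬Bs.Adj w2 w1 := fun hc => na hc.symm
  have nuu : ¬Bs.Adj u u := Bs.irrefl
  have n11 : ¬Bs.Adj w1 w1 := Bs.irrefl
  have n22 : ¬Bs.Adj w2 w2 := Bs.irrefl
  rintro (a | a) (b | b) <;>
    [ (rcases hcov a with rfl | rfl | rfl <;> rcases hcov b with rfl | rfl | rfl);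
      (rcases hcov a with rfl | rfl | rfl <;> fin_cases b);
      (fin_cases a <;> rcases hcov b with rfl | rfl | rfl);
      (fin_cases a <;> fin_cases b)] <;>
    simp [f2, h12, h21, hu1, hu2, h1u, h2u, a1, a2, a1', a2', na, na', nuu, n11, n22]

lemma reverse_dir (h : ℕ) (hh : 1 ≤ h) (Bs : SimpleGraph (Fin 3))
    (hcond : 3 - connectivity Bs ≤ h)
    (hcase : (Bs.edgeSet.ncard = 3 ∧ h = 1) ∨ (Bs.edgeSet.ncard = 2 ∧ h = 2) ∨
      (Bs.edgeSet.ncard = 0 ∧ h = 3)) :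
    ∃ A B : Set (Fin 3 ⊕ Fin h), A ≠ B ∧
      IsPremolecule 3 (molecule 3 h Bs) A ∧ IsPremolecule 3 (molecule 3 h Bs) B := by
  rcases hcase with ⟨hE, rfl⟩ | ⟨hE, rfl⟩ | ⟨hE, rfl⟩
  · -- K₄
    have hall := allAdj_of_ncard3 Bs hE
    let e : molecule 3 1 Bs ≃g molecule 3 1 Bs :=
      ⟨Function.Involutive.toPerm f1 f1_inv, f1_adj Bs hall _ _⟩
    refine ⟨{x | ∃ i, x = Sum.inl i}, {x | ∃ i, e x = Sum.inl i}, ?_,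
      ⟨1, Bs, RelIso.refl (molecule 3 1 Bs).Adj, le_refl 1, hcond, fun a => by simp⟩,
      ⟨1, Bs, e, le_refl 1, hcond, fun a => Iff.rfl⟩⟩
    intro hEq
    have h1 : (Sum.inl 2 : Fin 3 ⊕ Fin 1) ∈ {x | ∃ i, x = Sum.inl (i : Fin 3)} := ⟨2, rfl⟩
    rw [hEq] at h1
    obtain ⟨i, hi⟩ := h1
    have he2 : e (Sum.inl 2) = Sum.inr 0 := by exact rfl
    rw [he2] at hi
    cases hi
  · -- path, h = 2
    obtain ⟨u, w1, w2, hcov, h12, hu1, hu2, a1, a2, na⟩ := path_of_ncard2 Bs hE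
    let e : molecule 3 2 Bs ≃g molecule 3 2 Bs :=
      ⟨Function.Involutive.toPerm (f2 w1 w2) (f2_inv w1 w2 h12),
        f2_adj Bs u w1 w2 hcov h12 hu1 hu2 a1 a2 na _ _⟩
    refine ⟨{x | ∃ i, x = Sum.inl i}, {x | ∃ i, e x = Sum.inl i}, ?_,
      ⟨2, Bs, RelIso.refl (molecule 3 2 Bs).Adj, one_le_two, hcond, fun a => by simp⟩,
      ⟨2, Bs, e, one_le_two, hcond, fun a => Iff.rfl⟩⟩
    intro hEq
    have h1 : (Sum.inl w1 : Fin 3 ⊕ Fin 2) ∈ {x | ∃ i, x = Sum.inl (i : Fin 3)} := ⟨w1, rfl⟩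
    rw [hEq] at h1
    obtain ⟨i, hi⟩ := h1
    have he2 : e (Sum.inl w1) = Sum.inr 0 := by
      show f2 w1 w2 (Sum.inl w1) = Sum.inr 0
      simp [f2]
    rw [he2] at hi
    cases hi
  · -- K₃,₃
    have hno := noAdj_of_ncard0 Bs hE
    let e : molecule 3 3 Bs ≃g molecule 3 3 Bs :=
      ⟨Equiv.sumComm (Fin 3) (Fin 3), f3_adj Bs hno _ _⟩
    refine ⟨{x | ∃ i, x = Sum.inl i}, {x | ∃ i, e x = Sum.inl i}, ?_,
      ⟨3, Bs, RelIso.refl (molecule 3 3 Bs).Adj, by norm_num, hcond, fun a => by simp⟩,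
      ⟨3, Bs, e, by norm_num, hcond, fun a => Iff.rfl⟩⟩
    intro hEq
    have h1 : (Sum.inl 0 : Fin 3 ⊕ Fin 3) ∈ {x | ∃ i, x = Sum.inl (i : Fin 3)} := ⟨0, rfl⟩
    rw [hEq] at h1
    obtain ⟨i, hi⟩ := h1
    have he2 : e (Sum.inl 0) = Sum.inr 0 := by exact rfl
    rw [he2] at hi
    cases hi

lemma forward_key (h : ℕ) (hh : 1 ≤ h) (Bs : SimpleGraph (Fin 3))
    (D : Set (Fin 3 ⊕ Fin h)) (hD : IsPremolecule 3 (molecule 3 h Bs) D)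
    (hDC : D ≠ {x | ∃ i, x = Sum.inl i}) :
    (Bs.edgeSet.ncard = 3 ∧ h = 1) ∨ (Bs.edgeSet.ncard = 2 ∧ h = 2) ∨
      (Bs.edgeSet.ncard = 0 ∧ h = 3) := by
  obtain ⟨h', Bs', e, hh', hcond', hmem⟩ := hD
  have hcard : h' = h := by
    have hc := Fintype.card_congr e.toEquiv
    simp [Fintype.card_sum] at hc
    omega
  subst h'
  set ε : (Fin 3 ⊕ Fin h) ≃ (Fin 3 ⊕ Fin h) := e.toEquiv with hε
  have hmem' : ∀ a, a ∈ D ↔ ∃ i, ε a = Sum.inl i := hmem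
  -- ncard of D
  have hDeq : D = (⇑ε.symm) '' (Set.range Sum.inl) := by
    ext x
    simp only [Set.mem_image, Set.mem_range, hmem']
    constructor
    · rintro ⟨i, hi⟩
      exact ⟨Sum.inl i, ⟨i, rfl⟩, by rw [← hi]; exact ε.symm_apply_apply x⟩
    · rintro ⟨y, ⟨i, rfl⟩, hy⟩
      exact ⟨i, by rw [← hy, ε.apply_symm_apply]⟩
  have hrl : (Set.range (Sum.inl : Fin 3 → Fin 3 ⊕ Fin h)).ncard = 3 := by
    rw [← Set.image_univ, Set.ncard_image_of_injective _ Sum.inl_injective, Set.ncard_univ]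
    simp
  have hD3 : D.ncard = 3 := by
    rw [hDeq, Set.ncard_image_of_injective _ ε.symm.injective]
    exact hrl
  -- helpers
  have hget : ∀ z, z ∉ D → ∃ a, ε z = Sum.inr a := by
    intro z hz
    rw [hmem'] at hz
    cases hεz : ε z with
    | inl i => exact absurd ⟨i, hεz⟩ hz
    | inr a => exact ⟨a, rfl⟩
  have hnadj : ∀ x y : Fin 3, Sum.inl x ∉ D → Sum.inl y ∉ D → ¬Bs.Adj x y := by
    intro x y hx hy hadj
    obtain ⟨a, ha⟩ := hget _ hx
    obtain ⟨b, hb⟩ := hget _ hy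
    have h2 : (molecule 3 h Bs').Adj (e (Sum.inl x)) (e (Sum.inl y)) :=
      e.map_adj_iff.mpr (by simpa using hadj)
    rw [show (e (Sum.inl x) : Fin 3 ⊕ Fin h) = ε (Sum.inl x) from rfl,
      show (e (Sum.inl y) : Fin 3 ⊕ Fin h) = ε (Sum.inl y) from rfl, ha, hb] at h2
    simpa using h2
  have hadjD : ∀ x y : Fin 3, Sum.inl x ∉ D → Sum.inl y ∈ D → Bs.Adj x y := by
    intro x y hx hy
    obtain ⟨a, ha⟩ := hget _ hx
    obtain ⟨i, hi⟩ := (hmem' _).mp hy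
    have h2 : (molecule 3 h Bs').Adj (e (Sum.inl x)) (e (Sum.inl y)) := by
      rw [show (e (Sum.inl x) : Fin 3 ⊕ Fin h) = ε (Sum.inl x) from rfl,
        show (e (Sum.inl y) : Fin 3 ⊕ Fin h) = ε (Sum.inl y) from rfl, ha, hi]
      simp
    simpa using e.map_adj_iff.mp h2
  -- dichotomy
  have hsplit : (∀ x : Fin 3, Sum.inl x ∈ D) ∨ (∀ j : Fin h, Sum.inr j ∈ D) := by
    by_contra hcon
    push_neg at hcon
    obtain ⟨⟨x, hx⟩, ⟨j, hj⟩⟩ := hcon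
    obtain ⟨a, ha⟩ := hget _ hx
    obtain ⟨b, hb⟩ := hget _ hj
    have h2 : (molecule 3 h Bs').Adj (e (Sum.inl x)) (e (Sum.inr j)) :=
      e.map_adj_iff.mpr (by simp)
    rw [show (e (Sum.inl x) : Fin 3 ⊕ Fin h) = ε (Sum.inl x) from rfl,
      show (e (Sum.inr j) : Fin 3 ⊕ Fin h) = ε (Sum.inr j) from rfl, ha, hb] at h2
    simpa using h2
  rcases hsplit with hAll | hInr
  · exfalso
    apply hDC
    have hCD : {x : Fin 3 ⊕ Fin h | ∃ i, x = Sum.inl i} ⊆ D := by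
      rintro x ⟨i, rfl⟩; exact hAll i
    have hC3 : ({x : Fin 3 ⊕ Fin h | ∃ i, x = Sum.inl i}).ncard = 3 := by
      have : {x : Fin 3 ⊕ Fin h | ∃ i, x = Sum.inl i} = Set.range Sum.inl := by
        ext x; simp [Set.mem_range, eq_comm]
      rw [this]
      rw [← Set.image_univ, Set.ncard_image_of_injective _ Sum.inl_injective, Set.ncard_univ]
      simp
    exact (Set.eq_of_subset_of_ncard_le hCD (by omega) (Set.toFinite _)).symm
  · -- every inr in D
    have hle3 : h ≤ 3 := by
      choose g hg using fun j => (hmem' (Sum.inr j)).mp (hInr j)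
      have hginj : Function.Injective g := by
        intro j j' hjj
        have h1 := hg j
        rw [hjj, ← hg j'] at h1
        exact Sum.inr_injective (ε.injective h1)
      have := Fintype.card_le_of_injective g hginj
      simpa using this
    interval_cases h
    · -- h = 1
      left
      refine ⟨?_, rfl⟩
      have hw : ∃ w : Fin 3, Sum.inl w ∉ D := by
        by_contra hcw
        push_neg at hcw
        have hsub : insert (Sum.inr 0) (Set.range (Sum.inl : Fin 3 → Fin 3 ⊕ Fin 1)) ⊆ D := by
          rintro x (rfl | ⟨i, rfl⟩)
          · exact hInr 0
          · exact hcw i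
        have hc4 : (insert (Sum.inr (0 : Fin 1))
            (Set.range (Sum.inl : Fin 3 → Fin 3 ⊕ Fin 1))).ncard = 4 := by
          rw [Set.ncard_insert_of_notMem (by rintro ⟨i, hi⟩; cases hi), hrl]
        have := Set.ncard_le_ncard hsub (Set.toFinite _)
        omega
      obtain ⟨w, hwD⟩ := hw
      have honeout : ∀ q : Fin 3, q ≠ w → Sum.inl q ∈ D := by
        intro q hq
        by_contra hqD
        have hn : (insert (Sum.inl w) (insert (Sum.inl q) D)).ncard = D.ncard + 2 := by
          rw [Set.ncard_insert_of_notMem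
              (by simp only [Set.mem_insert_iff]
                  rintro (hc | hc)
                  · exact hq (Sum.inl_injective hc).symm
                  · exact hwD hc),
            Set.ncard_insert_of_notMem hqD]
        have hu4 : (Set.univ : Set (Fin 3 ⊕ Fin 1)).ncard = 4 := by
          rw [Set.ncard_univ]; simp
        have := Set.ncard_le_ncard (Set.subset_univ (insert (Sum.inl w) (insert (Sum.inl q) D)))
          (Set.toFinite _)
        omega
      have hwadj : ∀ q : Fin 3, q ≠ w → Bs.Adj w q := fun q hq =>
        hadjD w q hwD (honeout q hq)
      by_cases hall : ∀ p q : Fin 3, p ≠ q → Bs.Adj p q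
      · exact ncard_of_allAdj Bs hall
      · exfalso
        push_neg at hall
        obtain ⟨p, q, hpq, hna⟩ := hall
        have hpw : p ≠ w := by
          rintro rfl
          exact hna (hwadj q hpq.symm)
        have hqw : q ≠ w := by
          rintro rfl
          exact hna (hwadj p hpw).symm
        obtain ⟨i, hi⟩ := (hmem' _).mp (honeout p hpw)
        obtain ⟨j, hj⟩ := (hmem' _).mp (honeout q hqw)
        have hij : i ≠ j := by
          rintro rfl
          rw [← hj] at hi
          exact hpq (Sum.inl_injective (ε.injective hi))
        have hnadj' : ¬Bs'.Adj i j := by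
          intro hc
          apply hna
          have h2 : (molecule 3 1 Bs').Adj (e (Sum.inl p)) (e (Sum.inl q)) := by
            rw [show (e (Sum.inl p) : Fin 3 ⊕ Fin 1) = ε (Sum.inl p) from rfl,
              show (e (Sum.inl q) : Fin 3 ⊕ Fin 1) = ε (Sum.inl q) from rfl, hi, hj]
            simpa using hc
          simpa using e.map_adj_iff.mp h2
        have hcle := conn_le_one Bs' i j hij hnadj'
        omega
    · -- h = 2
      right; left
      refine ⟨?_, rfl⟩
      have hu : ∃ u : Fin 3, Sum.inl u ∈ D := by
        by_contra hcu
        push_neg at hcu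
        have hsub : D ⊆ Set.range (Sum.inr : Fin 2 → Fin 3 ⊕ Fin 2) := by
          intro x hx
          cases x with
          | inl a => exact absurd hx (hcu a)
          | inr b => exact ⟨b, rfl⟩
        have h2 : (Set.range (Sum.inr : Fin 2 → Fin 3 ⊕ Fin 2)).ncard = 2 := by
          rw [← Set.image_univ, Set.ncard_image_of_injective _ Sum.inr_injective, Set.ncard_univ]
          simp
        have := Set.ncard_le_ncard hsub (Set.toFinite _)
        omega
      obtain ⟨u, huD⟩ := hu
      have hout : ∀ q : Fin 3, q ≠ u → Sum.inl q ∉ D := by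
        intro q hq hqD
        have hsub : insert (Sum.inl u) (insert (Sum.inl q)
            (insert (Sum.inr 0) {Sum.inr 1})) ⊆ D := by
          rintro x (rfl | rfl | rfl | rfl)
          · exact huD
          · exact hqD
          · exact hInr 0
          · exact hInr 1
        have hn4 : (insert (Sum.inl u) (insert (Sum.inl q)
            (insert (Sum.inr 0) ({Sum.inr 1} : Set (Fin 3 ⊕ Fin 2))))).ncard = 4 := by
          rw [Set.ncard_insert_of_notMem (by simp [hq.symm]),
            Set.ncard_insert_of_notMem (by simp),
            Set.ncard_insert_of_notMem (by simp), Set.ncard_singleton]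
        have := Set.ncard_le_ncard hsub (Set.toFinite _)
        omega
      obtain ⟨w1, w2, h12, h1u, h2u, hcov⟩ := fin3_others u
      have na : ¬Bs.Adj w1 w2 := hnadj w1 w2 (hout w1 h1u) (hout w2 h2u)
      have a1 : Bs.Adj u w1 := (hadjD w1 u (hout w1 h1u) huD).symm
      have a2 : Bs.Adj u w2 := (hadjD w2 u (hout w2 h2u) huD).symm
      exact ncard_of_path Bs u w1 w2 hcov h12 (fun hc => h1u hc.symm) (fun hc => h2u hc.symm)
        a1 a2 na
    · -- h = 3
      right; right
      refine ⟨?_, rfl⟩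
      have hnone : ∀ x : Fin 3, Sum.inl x ∉ D := by
        intro x hxD
        have hsub : insert (Sum.inl x) (insert (Sum.inr 0) (insert (Sum.inr 1)
            ({Sum.inr 2} : Set (Fin 3 ⊕ Fin 3)))) ⊆ D := by
          rintro y (rfl | rfl | rfl | rfl)
          · exact hxD
          · exact hInr 0
          · exact hInr 1
          · exact hInr 2
        have hn4 : (insert (Sum.inl x) (insert (Sum.inr 0) (insert (Sum.inr 1)
            ({Sum.inr 2} : Set (Fin 3 ⊕ Fin 3))))).ncard = 4 := by
          rw [Set.ncard_insert_of_notMem (by simp),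
            Set.ncard_insert_of_notMem (by simp),
            Set.ncard_insert_of_notMem (by simp), Set.ncard_singleton]
        have := Set.ncard_le_ncard hsub (Set.toFinite _)
        omega
      exact ncard_of_empty Bs (fun p q => hnadj p q (hnone p) (hnone q))

/-- a 3-molecule `ϑ_{B₃}^{Bs,h}` is ambiguous (has more than one
base) iff either it has 3 internal edges and `h = 1` (it is `K₄`), or 2 internal
edges and `h = 2`, or no internal edge and `h = 3` (it is `K₃,₃`). -/
theorem three_molecule_ambiguous_iff (h : ℕ) (hh : 1 ≤ h)
    (Bs : SimpleGraph (Fin 3)) (hcond : 3 - connectivity Bs ≤ h) :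
    (∃ A B : Set (Fin 3 ⊕ Fin h), A ≠ B ∧
        IsPremolecule 3 (molecule 3 h Bs) A ∧ IsPremolecule 3 (molecule 3 h Bs) B) ↔
      ((Bs.edgeSet.ncard = 3 ∧ h = 1) ∨ (Bs.edgeSet.ncard = 2 ∧ h = 2) ∨
        (Bs.edgeSet.ncard = 0 ∧ h = 3)) := by
  constructor
  · rintro ⟨A, B, hAB, hA, hB⟩
    by_cases hAC : A = {x | ∃ i, x = Sum.inl i}
    · exact forward_key h hh Bs B hB (fun hBC => hAB (hAC.trans hBC.symm))
    · exact forward_key h hh Bs A hA hAC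
  · exact reverse_dir h hh Bs hcond
end
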